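/- Let M ∈ ℝ^{s×s} be symmetric, and define A'(τ,ζ) = φ(τ)ᵀ M φ(ζ) where φ(τ) = (1, τ, …, τ^{s−1})ᵀ. Let S ∈ ℝ^{N×N} be skew-symmetric and g : [0,1] → ℝ^N be any integrable function. Then ∫₀¹∫₀¹ A'(τ,ζ) g(τ)ᵀ S g(ζ) dζ dτ = 0. -/

import Mathlib

open MeasureTheory Matrix

set_option maxHeartbeats 800000 in
private lemma integral_sum4 {α β γ δ : Type*} [Fintype α] [Fintype β] [Fintype γ] [Fintype δ]
    (f : α → β → γ → δ → ℝ → ℝ)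
    (hf : ∀ a b c d, IntervalIntegrable (f a b c d) volume 0 1) :
    (∫ x in (0:ℝ)..1, ∑ a, ∑ b, ∑ c, ∑ d, f a b c d x)
      = ∑ a, ∑ b, ∑ c, ∑ d, ∫ x in (0:ℝ)..1, f a b c d x := by
  have h : ∀ x : ℝ, (∑ a, ∑ b, ∑ c, ∑ d, f a b c d x)
      = ∑ p : α × β × γ × δ, f p.1 p.2.1 p.2.2.1 p.2.2.2 x := fun x => by
    simp [Fintype.sum_prod_type]
  simp_rw [h]
  rw [intervalIntegral.integral_finset_sum
    (f := fun (p : α × β × γ × δ) x => f p.1 p.2.1 p.2.2.1 p.2.2.2 x)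
    (fun p _ => hf p.1 p.2.1 p.2.2.1 p.2.2.2)]
  simp [Fintype.sum_prod_type]

/-- Key algebraic identity for energy preservation: if `M` is symmetric,
`A'(τ,ζ) = φ(τ)ᵀ M φ(ζ)` with `φ(τ) = (1, τ, …, τ^{s-1})ᵀ`, and `S` is
skew-symmetric, then `∫₀¹∫₀¹ A'(τ,ζ) g(τ)ᵀ S g(ζ) dζ dτ = 0`. -/
theorem stmt_4 {s N : ℕ} (M : Matrix (Fin s) (Fin s) ℝ) (hM : M.IsSymm)
    (S : Matrix (Fin N) (Fin N) ℝ) (hS : Sᵀ = -S)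
    (g : ℝ → Fin N → ℝ)
    (hg : IntervalIntegrable g volume 0 1) :
    ∫ τ in (0:ℝ)..1, ∫ ζ in (0:ℝ)..1,
      (∑ i : Fin s, ∑ j : Fin s, τ ^ (i : ℕ) * M i j * ζ ^ (j : ℕ)) *
        dotProduct (g τ) (S.mulVec (g ζ)) = 0 := by
  -- componentwise integrability
  have hgc : ∀ l : Fin N, IntervalIntegrable (fun x => g x l) volume 0 1 := fun l =>
    ⟨(ContinuousLinearMap.proj l : (Fin N → ℝ) →L[ℝ] ℝ).integrable_comp hg.1,
     (ContinuousLinearMap.proj l : (Fin N → ℝ) →L[ℝ] ℝ).integrable_comp hg.2⟩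
  have hmono : ∀ (n : ℕ) (l : Fin N),
      IntervalIntegrable (fun x => x ^ n * g x l) volume 0 1 := fun n l =>
    (hgc l).continuousOn_mul (by fun_prop)
  -- moments of g
  set u : ℕ → Fin N → ℝ := fun n l => ∫ x in (0:ℝ)..1, x ^ n * g x l with hu
  -- pointwise expansion of the integrand
  have hpt : ∀ τ ζ : ℝ,
      (∑ i : Fin s, ∑ j : Fin s, τ ^ (i : ℕ) * M i j * ζ ^ (j : ℕ)) *
        dotProduct (g τ) (S.mulVec (g ζ)) =
      ∑ k : Fin N, ∑ l : Fin N, ∑ i : Fin s, ∑ j : Fin s,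
        (M i j * S k l * (τ ^ (i:ℕ) * g τ k)) * (ζ ^ (j:ℕ) * g ζ l) := by
    intro τ ζ
    simp only [dotProduct, Matrix.mulVec, Finset.sum_mul, Finset.mul_sum]
    exact Finset.sum_congr rfl fun k _ => Finset.sum_congr rfl fun l _ =>
      Finset.sum_congr rfl fun i _ => Finset.sum_congr rfl fun j _ => by ring
  -- inner integral
  have hinner : ∀ τ : ℝ,
      (∫ ζ in (0:ℝ)..1,
        (∑ i : Fin s, ∑ j : Fin s, τ ^ (i : ℕ) * M i j * ζ ^ (j : ℕ)) *
          dotProduct (g τ) (S.mulVec (g ζ))) =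
      ∑ k : Fin N, ∑ l : Fin N, ∑ i : Fin s, ∑ j : Fin s,
        (M i j * S k l * u (j:ℕ) l) * (τ ^ (i:ℕ) * g τ k) := by
    intro τ
    simp_rw [hpt τ]
    rw [integral_sum4 (fun k l i j ζ => (M i j * S k l * (τ ^ (i:ℕ) * g τ k)) * (ζ ^ (j:ℕ) * g ζ l))
      (fun k l i j => (hmono (j:ℕ) l).const_mul _)]
    refine Finset.sum_congr rfl fun k _ => Finset.sum_congr rfl fun l _ =>
      Finset.sum_congr rfl fun i _ => Finset.sum_congr rfl fun j _ => ?_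
    rw [intervalIntegral.integral_const_mul]
    simp only [hu]
    ring
  simp_rw [hinner]
  rw [integral_sum4 (fun k l i j τ => (M i j * S k l * u (j:ℕ) l) * (τ ^ (i:ℕ) * g τ k))
    (fun k l i j => (hmono (i:ℕ) k).const_mul _)]
  simp_rw [intervalIntegral.integral_const_mul]
  -- the resulting quadruple sum vanishes by (skew-)symmetry
  set T : ℝ := ∑ k : Fin N, ∑ l : Fin N, ∑ i : Fin s, ∑ j : Fin s,
      M i j * S k l * u (j:ℕ) l * u (i:ℕ) k with hT
  have hflip : T = ∑ k : Fin N, ∑ l : Fin N, ∑ i : Fin s, ∑ j : Fin s,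
      M j i * S l k * u (i:ℕ) k * u (j:ℕ) l := by
    rw [hT, Finset.sum_comm]
    exact Finset.sum_congr rfl fun k _ => Finset.sum_congr rfl fun l _ => Finset.sum_comm
  have hneg : T = -T := by
    nth_rewrite 1 [hflip]
    rw [hT]
    simp only [← Finset.sum_neg_distrib]
    refine Finset.sum_congr rfl fun k _ => Finset.sum_congr rfl fun l _ =>
      Finset.sum_congr rfl fun i _ => Finset.sum_congr rfl fun j _ => ?_
    have h1 : M j i = M i j := hM.apply i j
    have h2 : S l k = -S k l := by
      have := congrFun (congrFun hS k) l
      simpa using this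
    rw [h1, h2]; ring
  have : T = 0 := by linarith
  calc (∑ k : Fin N, ∑ l : Fin N, ∑ i : Fin s, ∑ j : Fin s,
      M i j * S k l * u (j:ℕ) l * ∫ τ in (0:ℝ)..1, τ ^ (i:ℕ) * g τ k) = T := by
        rw [hT]
    _ = 0 := this
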